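/- Any M-set in a finite-dimensional normed space is countable. -/
import Mathlib

theorem mset_countable
    (X : Type*) [NormedAddCommGroup X] [NormedSpace ℝ X] [FiniteDimensional ℝ X]
    (S : Set X)
    (hnorm : ∀ x ∈ S, 1 < ‖x‖)
    (hmid : ∀ x ∈ S, ∀ y ∈ S, x ≠ y → ‖x + y‖ = 2) :
    S.Countable := by
  apply Set.PairwiseDisjoint.countable_of_isOpen
    (s := fun x => Metric.ball x (‖x‖ - 1))
  · intro x hx y hy hxy
    apply Metric.ball_disjoint_ball
    have h1 : ‖x - y‖ ≥ 2 * ‖x‖ - 2 := by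
      have := hmid x hx y hy hxy
      have := norm_sub_norm_le ((2:ℝ) • x) (x + y)
      have h2 : (2:ℝ) • x - (x + y) = x - y := by module
      rw [h2] at this
      simp [norm_smul, hmid x hx y hy hxy] at this
      linarith
    have h1' : ‖x - y‖ ≥ 2 * ‖y‖ - 2 := by
      have := hmid x hx y hy hxy
      have := norm_sub_norm_le ((2:ℝ) • y) (x + y)
      have h2 : (2:ℝ) • y - (x + y) = y - x := by module
      rw [h2] at this
      simp [norm_smul, hmid x hx y hy hxy] at this
      rw [norm_sub_rev]
      linarith
    rw [dist_eq_norm]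
    linarith
  · intro x hx
    exact Metric.isOpen_ball
  · intro x hx
    exact Metric.nonempty_ball.2 (by linarith [hnorm x hx])
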